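/- Fix d, n ≥ 1, matrices K, Q, V ∈ ℝ^{d×d} with ‖V‖₂ ≤ C_V (spectral norm), and maps y_1,…,y_n : {−1,1}^n → ℝ^d with ‖y_i(x)‖₂ ≤ √d for all i and x. Let C_A = d·‖KᵀQ‖₂, logits a_{j,u}(x) = (K·y_u(x))ᵀ·Q·y_j(x), softmax weights â_{j,u}(x) = exp(a_{j,u}(x)) / Σ_{s=1}^n exp(a_{j,s}(x)), and Head_j(x) = Σ_{u=1}^n â_{j,u}(x)·V·y_u(x). Then for every x ∈ {−1,1}^n and all j, q ∈ {1,…,n}: ‖Head_j(x) − Head_j(x^{⊕q})‖₂ ≤ 4·C_V·√d·exp(4·C_A)·( ‖y_j(x) − y_j(x^{⊕q})‖₂ + (1/n)·Σ_{w=1}^n ‖y_w(x) − y_w(x^{⊕q})‖₂ ). -/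

import Mathlib

open scoped BigOperators
open Matrix

noncomputable section

namespace SensTF

/-- Flip the `q`-th bit of `x`. -/
def flip {n : ℕ} (x : Fin n → Bool) (q : Fin n) : Fin n → Bool :=
  Function.update x q (!(x q))

/-- Euclidean norm of a vector in `ℝ^d`. -/
def enorm {d : ℕ} (v : Fin d → ℝ) : ℝ := Real.sqrt (∑ j : Fin d, (v j) ^ 2)

/-- Spectral norm (ℓ²-operator norm) of a `d × d` matrix. -/
def specNorm {d : ℕ} (M : Matrix (Fin d) (Fin d) ℝ) : ℝ :=
  ‖Matrix.toEuclideanCLM (𝕜 := ℝ) M‖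

/-- Attention logit `a_{i,u} = (K y_u)ᵀ Q y_i`. -/
def attLogit {d n : ℕ} (K Q : Matrix (Fin d) (Fin d) ℝ)
    (yp : Fin n → Fin d → ℝ) (i u : Fin n) : ℝ :=
  dotProduct (K.mulVec (yp u)) (Q.mulVec (yp i))

/-- Attention weight (softmax of the logits). -/
def attWeight {d n : ℕ} (K Q : Matrix (Fin d) (Fin d) ℝ)
    (yp : Fin n → Fin d → ℝ) (i u : Fin n) : ℝ :=
  Real.exp (attLogit K Q yp i u) / ∑ s : Fin n, Real.exp (attLogit K Q yp i s)

end SensTF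

open SensTF

section Aux

lemma enorm_eq {d : ℕ} (v : Fin d → ℝ) :
    SensTF.enorm v = ‖(WithLp.equiv 2 (Fin d → ℝ)).symm v‖ := by
  rw [EuclideanSpace.norm_eq]; simp [SensTF.enorm, sq_abs]

lemma enorm_nonneg' {d : ℕ} (v : Fin d → ℝ) : 0 ≤ SensTF.enorm v := Real.sqrt_nonneg _

lemma enorm_mulVec_le {d : ℕ} (M : Matrix (Fin d) (Fin d) ℝ) (v : Fin d → ℝ) :
    SensTF.enorm (M.mulVec v) ≤ specNorm M * SensTF.enorm v := by
  rw [enorm_eq, enorm_eq, specNorm]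
  have := (Matrix.toEuclideanCLM (𝕜 := ℝ) M).le_opNorm ((WithLp.equiv 2 (Fin d → ℝ)).symm v)
  rwa [WithLp.equiv_symm_apply, Matrix.toEuclideanCLM_toLp] at this

lemma abs_dot_le {d : ℕ} (u v : Fin d → ℝ) :
    |dotProduct u v| ≤ SensTF.enorm u * SensTF.enorm v := by
  rw [enorm_eq, enorm_eq]
  have := abs_real_inner_le_norm ((WithLp.equiv 2 (Fin d → ℝ)).symm u)
    ((WithLp.equiv 2 (Fin d → ℝ)).symm v)
  simpa [real_inner_comm, PiLp.inner_apply, dotProduct, mul_comm] using this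

lemma enorm_sum_le' {d : ℕ} {ι : Type*} (s : Finset ι) (f : ι → Fin d → ℝ) :
    SensTF.enorm (∑ i ∈ s, f i) ≤ ∑ i ∈ s, SensTF.enorm (f i) := by
  simp only [enorm_eq]
  have h : (WithLp.equiv 2 (Fin d → ℝ)).symm (∑ i ∈ s, f i)
      = ∑ i ∈ s, (WithLp.equiv 2 (Fin d → ℝ)).symm (f i) := by
    simp only [WithLp.equiv_symm_apply, WithLp.toLp_sum]
  rw [h]; exact norm_sum_le _ _

lemma enorm_smul' {d : ℕ} (c : ℝ) (v : Fin d → ℝ) :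
    SensTF.enorm (c • v) = |c| * SensTF.enorm v := by
  simp only [enorm_eq]
  have h : (WithLp.equiv 2 (Fin d → ℝ)).symm (c • v)
      = c • (WithLp.equiv 2 (Fin d → ℝ)).symm v := rfl
  rw [h, norm_smul, Real.norm_eq_abs]

lemma enorm_add_le' {d : ℕ} (u v : Fin d → ℝ) :
    SensTF.enorm (u + v) ≤ SensTF.enorm u + SensTF.enorm v := by
  simp only [enorm_eq]; exact norm_add_le _ _

lemma abs_exp_sub_exp_le {A x y : ℝ} (hx : x ≤ A) (hy : y ≤ A) :
    |Real.exp x - Real.exp y| ≤ Real.exp A * |x - y| := by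
  rcases le_total y x with h | h
  · rw [abs_of_nonneg (sub_nonneg.2 (Real.exp_le_exp.2 h)), abs_of_nonneg (sub_nonneg.2 h)]
    have h1 := Real.add_one_le_exp (y - x)
    have h2 : Real.exp x ≤ Real.exp A := Real.exp_le_exp.2 hx
    have h3 : Real.exp y = Real.exp x * Real.exp (y - x) := by
      rw [← Real.exp_add]; ring_nf
    nlinarith [Real.exp_pos x, Real.exp_pos (y - x)]
  · rw [abs_of_nonpos (sub_nonpos.2 (Real.exp_le_exp.2 h)), abs_of_nonpos (sub_nonpos.2 h)]
    have h1 := Real.add_one_le_exp (x - y)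
    have h2 : Real.exp y ≤ Real.exp A := Real.exp_le_exp.2 hy
    have h3 : Real.exp x = Real.exp y * Real.exp (x - y) := by
      rw [← Real.exp_add]; ring_nf
    nlinarith [Real.exp_pos y, Real.exp_pos (x - y)]

end Aux

set_option maxHeartbeats 1000000 in
/-- Lemma: pointwise Lipschitz bound on an attention head at higher layers.
If `‖V‖₂ ≤ C_V`, `‖y_i(x)‖₂ ≤ √d` for all `i, x`, and `C_A = d·‖KᵀQ‖₂`, then with
`Head_j(x) = ∑_u â_{j,u}(x) V y_u(x)`:
`‖Head_j(x) − Head_j(x^{⊕q})‖₂ ≤ 4·C_V·√d·exp(4C_A)·(‖y_j(x) − y_j(x^{⊕q})‖₂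
  + (1/n)·∑_w ‖y_w(x) − y_w(x^{⊕q})‖₂)`. -/
theorem statement12 {d n : ℕ} (K Q V : Matrix (Fin d) (Fin d) ℝ)
    (CV : ℝ) (hV : specNorm V ≤ CV)
    (y : Fin n → (Fin n → Bool) → Fin d → ℝ)
    (hy : ∀ (i : Fin n) (x : Fin n → Bool), SensTF.enorm (y i x) ≤ Real.sqrt d)
    (x : Fin n → Bool) (j q : Fin n) :
    SensTF.enorm ((fun jj => ∑ u : Fin n,
              attWeight K Q (fun w => y w x) j u * (V.mulVec (y u x)) jj) -
           (fun jj => ∑ u : Fin n,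
              attWeight K Q (fun w => y w (flip x q)) j u *
                (V.mulVec (y u (flip x q))) jj)) ≤
      4 * CV * Real.sqrt d * Real.exp (4 * (d * specNorm (Kᵀ * Q))) *
        (SensTF.enorm (y j x - y j (flip x q)) +
          (1 / n) * ∑ w : Fin n, SensTF.enorm (y w x - y w (flip x q))) := by
  classical
  have hCV : 0 ≤ CV := le_trans (norm_nonneg _) hV
  have hn : 0 < n := j.pos
  have hnR : (0:ℝ) < n := by exact_mod_cast hn
  rcases Nat.eq_zero_or_pos d with hd | hd
  · subst hd
    have h0 : ∀ (v : Fin 0 → ℝ), SensTF.enorm v = 0 := by intro v; simp [SensTF.enorm]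
    simp only [h0, Finset.sum_const_zero, mul_zero, add_zero, zero_add]
    positivity
  -- main case
  have hd1 : (1:ℝ) ≤ Real.sqrt d := by
    rw [show (1:ℝ) = Real.sqrt 1 by simp]
    exact Real.sqrt_le_sqrt (by exact_mod_cast hd)
  have hsd0 : (0:ℝ) ≤ Real.sqrt d := Real.sqrt_nonneg _
  have hss : Real.sqrt d * Real.sqrt d = (d:ℝ) := Real.mul_self_sqrt (Nat.cast_nonneg d)
  set x' := flip x q with hx'
  set M := Kᵀ * Q with hM
  have hM0 : 0 ≤ specNorm M := norm_nonneg _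
  set A := (d:ℝ) * specNorm M with hA
  have hA0 : 0 ≤ A := mul_nonneg (Nat.cast_nonneg d) hM0
  -- dot-product form of the logits
  have hform : ∀ (z : Fin n → Bool) (w : Fin n),
      attLogit K Q (fun v => y v z) j w = dotProduct (y w z) (M.mulVec (y j z)) := by
    intro z w
    rw [attLogit, hM, dotProduct_comm, dotProduct_mulVec, ← mulVec_transpose,
      dotProduct_comm, mulVec_mulVec]
  -- logits are bounded by A
  have hlog : ∀ (z : Fin n → Bool) (u : Fin n),
      |attLogit K Q (fun v => y v z) j u| ≤ A := by
    intro z u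
    rw [hform]
    calc |dotProduct (y u z) (M.mulVec (y j z))|
        ≤ SensTF.enorm (y u z) * SensTF.enorm (M.mulVec (y j z)) := abs_dot_le _ _
      _ ≤ Real.sqrt d * (specNorm M * Real.sqrt d) := by
          refine mul_le_mul (hy u z) ?_ (enorm_nonneg' _) hsd0
          exact le_trans (enorm_mulVec_le M _) (mul_le_mul_of_nonneg_left (hy j z) hM0)
      _ = A := by linear_combination specNorm M * hss - hA
  set a : Fin n → ℝ := fun u => attLogit K Q (fun w => y w x) j u with ha
  set a' : Fin n → ℝ := fun u => attLogit K Q (fun w => y w x') j u with ha'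
  have haA : ∀ u, |a u| ≤ A := fun u => hlog x u
  have ha'A : ∀ u, |a' u| ≤ A := fun u => hlog x' u
  set S : ℝ := ∑ s : Fin n, Real.exp (a s) with hSdef
  set S' : ℝ := ∑ s : Fin n, Real.exp (a' s) with hS'def
  have hS_lb : (n:ℝ) * Real.exp (-A) ≤ S := by
    rw [hSdef]
    have : ∑ _s : Fin n, Real.exp (-A) ≤ ∑ s : Fin n, Real.exp (a s) :=
      Finset.sum_le_sum fun s _ => Real.exp_le_exp.2 (neg_le_of_abs_le (haA s))
    simpa [Finset.sum_const, Finset.card_univ, nsmul_eq_mul] using this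
  have hS'_lb : (n:ℝ) * Real.exp (-A) ≤ S' := by
    rw [hS'def]
    have : ∑ _s : Fin n, Real.exp (-A) ≤ ∑ s : Fin n, Real.exp (a' s) :=
      Finset.sum_le_sum fun s _ => Real.exp_le_exp.2 (neg_le_of_abs_le (ha'A s))
    simpa [Finset.sum_const, Finset.card_univ, nsmul_eq_mul] using this
  have hS_pos : 0 < S := lt_of_lt_of_le (mul_pos hnR (Real.exp_pos _)) hS_lb
  have hS'_pos : 0 < S' := lt_of_lt_of_le (mul_pos hnR (Real.exp_pos _)) hS'_lb
  have hn0 : (n:ℝ) ≠ 0 := hnR.ne' 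
  have hSinv : 1 / S ≤ Real.exp A / n := by
    rw [div_le_div_iff₀ hS_pos hnR]
    have h1 : (1:ℝ) * n = (n * Real.exp (-A)) * Real.exp A := by
      rw [mul_assoc, ← Real.exp_add]; simp
    have h2 : (1:ℝ) * n ≤ S * Real.exp A := by
      rw [h1]; exact mul_le_mul_of_nonneg_right hS_lb (Real.exp_pos A).le
    linarith [h2]
  have hw_eq : ∀ u, attWeight K Q (fun w => y w x) j u = Real.exp (a u) / S := by
    intro u; rw [attWeight, ha, hSdef]
  have hw'_eq : ∀ u, attWeight K Q (fun w => y w x') j u = Real.exp (a' u) / S' := by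
    intro u; rw [attWeight, ha', hS'def]
  have hw'_sum : ∑ u : Fin n, Real.exp (a' u) / S' = 1 := by
    rw [← Finset.sum_div, ← hS'def, div_self (ne_of_gt hS'_pos)]
  have hw_ub : ∀ u, Real.exp (a u) / S ≤ Real.exp (2*A) / n := by
    intro u
    rw [div_le_div_iff₀ hS_pos hnR]
    have hkey : Real.exp A * (n:ℝ) = Real.exp (2*A) * ((n:ℝ) * Real.exp (-A)) := by
      have : Real.exp (2*A) * Real.exp (-A) = Real.exp A := by
        rw [← Real.exp_add]; congr 1; ring
      rw [← this]; ring
    calc Real.exp (a u) * n ≤ Real.exp A * n :=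
          mul_le_mul_of_nonneg_right (Real.exp_le_exp.2 (le_of_abs_le (haA u))) hnR.le
      _ = Real.exp (2*A) * ((n:ℝ) * Real.exp (-A)) := hkey
      _ ≤ Real.exp (2*A) * S := mul_le_mul_of_nonneg_left hS_lb (Real.exp_pos _).le
  set Δ : Fin n → ℝ := fun w => SensTF.enorm (y w x - y w x') with hΔ
  have hΔ0 : ∀ w, 0 ≤ Δ w := fun w => enorm_nonneg' _
  set T : ℝ := ∑ w : Fin n, Δ w with hT
  have hT0 : 0 ≤ T := Finset.sum_nonneg fun w _ => hΔ0 w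
  -- deviation of the logits
  have hδ : ∀ w, |a w - a' w| ≤ Real.sqrt d * specNorm M * (Δ j + Δ w) := by
    intro w
    have h1 : a w - a' w = dotProduct (y w x) (M.mulVec (y j x - y j x'))
        + dotProduct (y w x - y w x') (M.mulVec (y j x')) := by
      rw [ha, ha']
      simp only [hform]
      rw [Matrix.mulVec_sub, dotProduct_sub, sub_dotProduct]
      ring
    rw [h1]
    calc |dotProduct (y w x) (M.mulVec (y j x - y j x'))
          + dotProduct (y w x - y w x') (M.mulVec (y j x'))|
        ≤ |dotProduct (y w x) (M.mulVec (y j x - y j x'))|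
          + |dotProduct (y w x - y w x') (M.mulVec (y j x'))| := abs_add_le _ _
      _ ≤ Real.sqrt d * (specNorm M * Δ j) + Δ w * (specNorm M * Real.sqrt d) := by
          refine add_le_add ?_ ?_
          · refine le_trans (abs_dot_le _ _) ?_
            refine mul_le_mul (hy w x) ?_ (enorm_nonneg' _) hsd0
            exact enorm_mulVec_le M _
          · refine le_trans (abs_dot_le _ _) ?_
            refine mul_le_mul_of_nonneg_left ?_ (hΔ0 w)
            exact le_trans (enorm_mulVec_le M _) (mul_le_mul_of_nonneg_left (hy j x') hM0)
      _ = Real.sqrt d * specNorm M * (Δ j + Δ w) := by ring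
  set D : ℝ := ∑ w : Fin n, |a w - a' w| with hD
  have hD0 : 0 ≤ D := Finset.sum_nonneg fun w _ => abs_nonneg _
  have hD_le : D ≤ Real.sqrt d * specNorm M * ((n:ℝ) * Δ j + T) := by
    rw [hD]
    calc ∑ w : Fin n, |a w - a' w|
        ≤ ∑ w : Fin n, Real.sqrt d * specNorm M * (Δ j + Δ w) :=
          Finset.sum_le_sum fun w _ => hδ w
      _ = Real.sqrt d * specNorm M * ((n:ℝ) * Δ j + T) := by
          rw [← Finset.mul_sum, Finset.sum_add_distrib, Finset.sum_const,
            Finset.card_univ, Fintype.card_fin, nsmul_eq_mul, hT]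
  -- denominators differ by at most exp A * D
  have hSS' : |S' - S| ≤ Real.exp A * D := by
    calc |S' - S| = |∑ s : Fin n, (Real.exp (a' s) - Real.exp (a s))| := by
          rw [hSdef, hS'def, Finset.sum_sub_distrib]
      _ ≤ ∑ s : Fin n, |Real.exp (a' s) - Real.exp (a s)| :=
          Finset.abs_sum_le_sum_abs _ _
      _ ≤ ∑ s : Fin n, Real.exp A * |a s - a' s| := by
          refine Finset.sum_le_sum fun s _ => ?_
          rw [abs_sub_comm (a s)]
          exact abs_exp_sub_exp_le (le_of_abs_le (ha'A s)) (le_of_abs_le (haA s))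
      _ = Real.exp A * D := by rw [hD, Finset.mul_sum]
  -- pointwise bound on the difference of attention weights
  have hdw : ∀ u, |Real.exp (a u) / S - Real.exp (a' u) / S'|
      ≤ Real.exp A * |a u - a' u| * (1/S)
        + (Real.exp (a' u) / S') * (|S' - S| * (1/S)) := by
    intro u
    have hid : Real.exp (a u)/S - Real.exp (a' u)/S'
        = (Real.exp (a u) - Real.exp (a' u)) * (1/S)
          + (Real.exp (a' u)/S') * ((S' - S) * (1/S)) := by
      field_simp
      ring
    rw [hid]
    refine le_trans (abs_add_le _ _) (add_le_add ?_ ?_)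
    · rw [abs_mul, abs_of_nonneg (one_div_nonneg.2 hS_pos.le)]
      refine mul_le_mul_of_nonneg_right ?_ (one_div_nonneg.2 hS_pos.le)
      exact abs_exp_sub_exp_le (le_of_abs_le (haA u)) (le_of_abs_le (ha'A u))
    · rw [abs_mul, abs_mul,
        abs_of_nonneg (div_nonneg (Real.exp_pos (a' u)).le hS'_pos.le),
        abs_of_nonneg (one_div_nonneg.2 hS_pos.le)]
  have hDW : ∑ u : Fin n, |Real.exp (a u)/S - Real.exp (a' u)/S'|
      ≤ 2 * Real.exp (2*A) / n * D := by
    calc ∑ u : Fin n, |Real.exp (a u)/S - Real.exp (a' u)/S'|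
        ≤ ∑ u : Fin n, (Real.exp A * |a u - a' u| * (1/S)
            + (Real.exp (a' u)/S') * (|S' - S| * (1/S))) :=
          Finset.sum_le_sum fun u _ => hdw u
      _ = Real.exp A * D * (1/S) + |S' - S| * (1/S) := by
          rw [Finset.sum_add_distrib, ← Finset.sum_mul]
          congr 1
          · rw [hD, Finset.mul_sum, Finset.sum_mul]
          · rw [← Finset.sum_mul, hw'_sum, one_mul]
      _ ≤ Real.exp A * D * (Real.exp A / n) + (Real.exp A * D) * (Real.exp A / n) := by
          refine add_le_add ?_ ?_
          · exact mul_le_mul_of_nonneg_left hSinv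
              (mul_nonneg (Real.exp_pos A).le hD0)
          · exact mul_le_mul hSS' hSinv (one_div_nonneg.2 hS_pos.le)
              (mul_nonneg (Real.exp_pos A).le hD0)
      _ = 2 * Real.exp (2*A) / n * D := by
          have hEE : Real.exp A * Real.exp A = Real.exp (2*A) := by
            rw [← Real.exp_add]; congr 1; ring
          linear_combination (2 * D / (n:ℝ)) * hEE
  -- decomposition of the head difference
  have key : ((fun jj => ∑ u : Fin n,
              attWeight K Q (fun w => y w x) j u * (V.mulVec (y u x)) jj) -
           (fun jj => ∑ u : Fin n,
              attWeight K Q (fun w => y w x') j u * (V.mulVec (y u x')) jj))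
      = ∑ u : Fin n, ((Real.exp (a u)/S) • (V.mulVec (y u x - y u x'))
          + (Real.exp (a u)/S - Real.exp (a' u)/S') • (V.mulVec (y u x'))) := by
    funext jj
    simp only [Pi.sub_apply, Finset.sum_apply, Pi.add_apply, Pi.smul_apply, smul_eq_mul,
      Matrix.mulVec_sub, hw_eq, hw'_eq]
    rw [← Finset.sum_sub_distrib]
    refine Finset.sum_congr rfl fun u _ => ?_
    ring
  rw [key]
  have main_bound : SensTF.enorm (∑ u : Fin n, ((Real.exp (a u)/S) • (V.mulVec (y u x - y u x'))
          + (Real.exp (a u)/S - Real.exp (a' u)/S') • (V.mulVec (y u x'))))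
      ≤ (Real.exp (2*A)/n) * CV * T
        + (2 * Real.exp (2*A) / n * D) * (CV * Real.sqrt d) := by
    calc SensTF.enorm (∑ u : Fin n, ((Real.exp (a u)/S) • (V.mulVec (y u x - y u x'))
          + (Real.exp (a u)/S - Real.exp (a' u)/S') • (V.mulVec (y u x'))))
        ≤ ∑ u : Fin n, SensTF.enorm ((Real.exp (a u)/S) • (V.mulVec (y u x - y u x'))
          + (Real.exp (a u)/S - Real.exp (a' u)/S') • (V.mulVec (y u x'))) :=
          enorm_sum_le' _ _
      _ ≤ ∑ u : Fin n, ((Real.exp (2*A)/n) * (CV * Δ u)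
          + |Real.exp (a u)/S - Real.exp (a' u)/S'| * (CV * Real.sqrt d)) := by
          refine Finset.sum_le_sum fun u _ => ?_
          refine le_trans (enorm_add_le' _ _) (add_le_add ?_ ?_)
          · rw [enorm_smul',
              abs_of_nonneg (div_nonneg (Real.exp_pos (a u)).le hS_pos.le)]
            refine mul_le_mul (hw_ub u) ?_ (enorm_nonneg' _)
              (div_nonneg (Real.exp_pos _).le hnR.le)
            exact le_trans (enorm_mulVec_le V _)
              (mul_le_mul_of_nonneg_right hV (enorm_nonneg' _))
          · rw [enorm_smul']
            refine mul_le_mul_of_nonneg_left ?_ (abs_nonneg _)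
            exact le_trans (enorm_mulVec_le V _)
              (mul_le_mul hV (hy u x') (enorm_nonneg' _) hCV)
      _ = (Real.exp (2*A)/n) * CV * T
          + (∑ u : Fin n, |Real.exp (a u)/S - Real.exp (a' u)/S'|) * (CV * Real.sqrt d) := by
          rw [Finset.sum_add_distrib, ← Finset.mul_sum, ← Finset.mul_sum, ← Finset.sum_mul, hT]
          ring
      _ ≤ (Real.exp (2*A)/n) * CV * T
          + (2 * Real.exp (2*A) / n * D) * (CV * Real.sqrt d) := by
          exact add_le_add_right
            (mul_le_mul_of_nonneg_right hDW (mul_nonneg hCV hsd0)) _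
  refine le_trans main_bound ?_
  -- final arithmetic
  have hE : Real.exp (2*A) * Real.exp (2*A) = Real.exp (4*A) := by
    rw [← Real.exp_add]; congr 1; ring
  have h2A : 2*A ≤ Real.exp (2*A) := by
    have := Real.add_one_le_exp (2*A); linarith
  have hE2pos : (0:ℝ) < Real.exp (2*A) := Real.exp_pos _
  have hE2ge1 : (1:ℝ) ≤ Real.exp (2*A) := Real.one_le_exp (by linarith)
  set U : ℝ := (n:ℝ) * Δ j + T with hU
  have hU0 : 0 ≤ U := add_nonneg (mul_nonneg hnR.le (hΔ0 j)) hT0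
  have hTU : T ≤ U := by
    rw [hU]; exact le_add_of_nonneg_left (mul_nonneg hnR.le (hΔ0 j))
  have hclear : Real.exp (2*A) * CV * T + 2 * Real.exp (2*A) * D * (CV * Real.sqrt d)
      ≤ 4 * CV * Real.sqrt d * Real.exp (4*A) * U := by
    have hE24 : Real.exp (2*A) ≤ Real.exp (4*A) := Real.exp_le_exp.2 (by linarith)
    have c1 : (0:ℝ) ≤ Real.exp (2*A) * CV := mul_nonneg hE2pos.le hCV
    have c2 : (0:ℝ) ≤ 2 * Real.exp (2*A) * CV * Real.sqrt d := by positivity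
    have c3 : (0:ℝ) ≤ Real.exp (4*A) * CV * U :=
      mul_nonneg (mul_nonneg (Real.exp_pos _).le hCV) hU0
    have h6 : 2*A * Real.exp (2*A) ≤ Real.exp (4*A) := by
      rw [← hE]; exact mul_le_mul_of_nonneg_right h2A hE2pos.le
    calc Real.exp (2*A) * CV * T + 2 * Real.exp (2*A) * D * (CV * Real.sqrt d)
        = (Real.exp (2*A) * CV) * T + (2 * Real.exp (2*A) * CV * Real.sqrt d) * D := by
          ring
      _ ≤ (Real.exp (2*A) * CV) * U
          + (2 * Real.exp (2*A) * CV * Real.sqrt d) * (Real.sqrt d * specNorm M * U) :=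
          add_le_add (mul_le_mul_of_nonneg_left hTU c1)
            (mul_le_mul_of_nonneg_left hD_le c2)
      _ = (Real.exp (2*A) * CV) * U + (2*A * Real.exp (2*A)) * (CV * U) := by
          linear_combination 2 * Real.exp (2*A) * CV * U * specNorm M * hss
            - 2 * Real.exp (2*A) * CV * U * hA
      _ ≤ (Real.exp (4*A) * CV) * U + Real.exp (4*A) * (CV * U) :=
          add_le_add
            (mul_le_mul_of_nonneg_right (mul_le_mul_of_nonneg_right hE24 hCV) hU0)
            (mul_le_mul_of_nonneg_right h6 (mul_nonneg hCV hU0))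
      _ = 2 * (Real.exp (4*A) * CV * U) := by ring
      _ ≤ 4 * (Real.exp (4*A) * CV * U) := by linarith
      _ ≤ 4 * (Real.exp (4*A) * CV * U) * Real.sqrt d :=
          le_mul_of_one_le_right (by linarith) hd1
      _ = 4 * CV * Real.sqrt d * Real.exp (4*A) * U := by ring
  have lhs_eq : (Real.exp (2*A)/n) * CV * T
      + (2 * Real.exp (2*A) / n * D) * (CV * Real.sqrt d)
      = (Real.exp (2*A) * CV * T + 2 * Real.exp (2*A) * D * (CV * Real.sqrt d)) / n := by
    ring
  have hinv : (n:ℝ) * (1/(n:ℝ)) = 1 := by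
    field_simp
  have rhs_eq : 4 * CV * Real.sqrt d * Real.exp (4*A) * (Δ j + (1/(n:ℝ)) * T) * n
      = 4 * CV * Real.sqrt d * Real.exp (4*A) * U := by
    rw [hU]
    linear_combination (4 * CV * Real.sqrt d * Real.exp (4*A) * T) * hinv
  rw [lhs_eq, div_le_iff₀ hnR]
  calc Real.exp (2*A) * CV * T + 2 * Real.exp (2*A) * D * (CV * Real.sqrt d)
      ≤ 4 * CV * Real.sqrt d * Real.exp (4*A) * U := hclear
    _ = 4 * CV * Real.sqrt d * Real.exp (4*A) * (Δ j + (1/(n:ℝ)) * T) * n := rhs_eq.symm
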